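/- Let L(x) = (1/6) e^{-x} + e^{-x/2} ( (1/6) cos(√3 x / 2) + (√3/6) sin(√3 x / 2) ) for x ≥ 0, the equivalent kernel for smoothing splines with m = 3. Then L(|·|) is a sixth-order kernel: ∫_ℝ L(|t|) dt = 1, ∫_ℝ t² L(|t|) dt = 0, and ∫_ℝ t⁴ L(|t|) dt = 0. -/

import Mathlib

open MeasureTheory Set Filter

set_option maxHeartbeats 1000000

noncomputable section

/-- The equivalent kernel for smoothing splines with `m = 3`:
`L(x) = (1/6) e^{-x} + e^{-x/2} ((1/6) cos(√3 x / 2) + (√3/6) sin(√3 x / 2))`. -/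
def L3ker (x : ℝ) : ℝ :=
  (1 / 6) * Real.exp (-x) +
    Real.exp (-x / 2) *
      ((1 / 6) * Real.cos (Real.sqrt 3 * x / 2) +
        (Real.sqrt 3 / 6) * Real.sin (Real.sqrt 3 * x / 2))

lemma aux_integrable (c : ℂ) (hc : 0 < c.re) (n : ℕ) :
    IntegrableOn (fun t : ℝ ↦ (t : ℂ) ^ n * Complex.exp (-(c * t))) (Ioi 0) := by
  have hbound : IntegrableOn (fun t : ℝ ↦ t ^ n * Real.exp (-(c.re * t))) (Ioi 0) := by
    have := integrableOn_rpow_mul_exp_neg_mul_rpow (p := 1) (s := (n : ℝ))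
      (by exact neg_one_lt_zero.trans_le (Nat.cast_nonneg n)) one_pos hc
    simpa [Real.rpow_one, Real.rpow_natCast, neg_mul] using this
  refine hbound.mono' ?_ ?_
  · exact (Continuous.aestronglyMeasurable (by continuity)).restrict
  · filter_upwards [ae_restrict_mem measurableSet_Ioi] with t ht
    have ht0 : (0:ℝ) < t := ht
    simp only [norm_mul, norm_pow, Complex.norm_real, Real.norm_eq_abs,
      Complex.norm_exp, Complex.neg_re, Complex.mul_re, Complex.ofReal_re,
      Complex.ofReal_im, mul_zero, sub_zero, abs_of_pos ht0]
    exact le_of_eq rfl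

lemma aux_tendsto (c : ℂ) (hc : 0 < c.re) (n : ℕ) :
    Tendsto (fun t : ℝ ↦ (t : ℂ) ^ n * Complex.exp (-(c * t))) atTop (nhds 0) := by
  apply squeeze_zero_norm' (a := fun t : ℝ ↦ t ^ (n:ℝ) * Real.exp (-c.re * t))
  · filter_upwards [eventually_gt_atTop (0:ℝ)] with t ht
    simp only [norm_mul, norm_pow, Complex.norm_real, Real.norm_eq_abs,
      Complex.norm_exp, Complex.neg_re, Complex.mul_re, Complex.ofReal_re,
      Complex.ofReal_im, mul_zero, sub_zero, abs_of_pos ht, Real.rpow_natCast, neg_mul]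
    exact le_of_eq rfl
  · exact tendsto_rpow_mul_exp_neg_mul_atTop_nhds_zero (n:ℝ) c.re hc

lemma hasDerivAt_cexp_neg (c : ℂ) (t : ℝ) :
    HasDerivAt (fun t : ℝ ↦ Complex.exp (-(c * t))) (-c * Complex.exp (-(c * t))) t := by
  have h1 : HasDerivAt (fun t : ℝ ↦ -(c * (t:ℂ))) (-c) t := by
    simpa [Pi.neg_def] using (Complex.ofRealCLM.hasDerivAt.const_mul c).neg
  simpa [mul_comm] using h1.cexp

lemma aux_integral (c : ℂ) (hc : 0 < c.re) :
    ∀ n : ℕ, ∫ t in Ioi (0:ℝ), (t:ℂ) ^ n * Complex.exp (-(c * t))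
      = (Nat.factorial n : ℂ) / c ^ (n + 1) := by
  have hc0 : c ≠ 0 := fun h => by simp [h] at hc
  intro n
  induction n with
  | zero =>
    have key := integral_Ioi_of_hasDerivAt_of_tendsto'
      (f := fun t : ℝ ↦ -c⁻¹ * Complex.exp (-(c * t)))
      (f' := fun t : ℝ ↦ Complex.exp (-(c * t))) (a := 0) (m := 0)
      (fun x _ => by
        have := (hasDerivAt_cexp_neg c x).const_mul (-c⁻¹)
        exact this.congr_deriv (by rw [← mul_assoc, neg_mul_neg, inv_mul_cancel₀ hc0, one_mul]))
      (by simpa using aux_integrable c hc 0)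
      (by simpa using (aux_tendsto c hc 0).const_mul (-c⁻¹))
    simp only [pow_zero, one_mul]
    rw [key]
    simp [hc0]
  | succ n ih =>
    have hint1 : IntegrableOn (fun t : ℝ ↦ ((n:ℂ)+1) * ((t:ℂ)^n * Complex.exp (-(c * t)))) (Ioi 0) :=
      (aux_integrable c hc n).const_mul _
    have hint2 : IntegrableOn (fun t : ℝ ↦ c * ((t:ℂ)^(n+1) * Complex.exp (-(c * t)))) (Ioi 0) :=
      (aux_integrable c hc (n+1)).const_mul c
    have hderiv : ∀ x ∈ Ici (0:ℝ), HasDerivAt (fun t : ℝ ↦ (t:ℂ) ^ (n+1) * Complex.exp (-(c * t)))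
        (((n:ℂ)+1) * ((x:ℂ)^n * Complex.exp (-(c * x)))
          - c * ((x:ℂ)^(n+1) * Complex.exp (-(c * x)))) x := by
      intro x _
      have hp : HasDerivAt (fun t : ℝ ↦ (t:ℂ) ^ (n+1)) (((n:ℂ)+1) * (x:ℂ)^n) x := by
        simpa using (hasDerivAt_pow (n+1) ((x:ℝ):ℂ)).comp_ofReal
      have := hp.mul (hasDerivAt_cexp_neg c x)
      exact this.congr_deriv (by ring)
    have key := integral_Ioi_of_hasDerivAt_of_tendsto' hderiv (hint1.sub hint2)
      (aux_tendsto c hc (n+1))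
    rw [integral_sub hint1 hint2, integral_const_mul, integral_const_mul, ih] at key
    have h0 : ((0:ℝ):ℂ) ^ (n+1) * Complex.exp (-(c * (0:ℝ))) = 0 := by simp
    rw [h0] at key
    rw [eq_div_iff (pow_ne_zero _ hc0)]
    push_cast [Nat.factorial_succ]
    field_simp at key
    linear_combination -key

def c2 : ℂ := (((1/2 : ℝ)):ℂ) - ((Real.sqrt 3 / 2 : ℝ):ℂ) * Complex.I

lemma hc2re : (0:ℝ) < c2.re := by simp [c2]

lemma hc2ne : c2 ≠ 0 := by
  intro h
  have := hc2re
  rw [h] at this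
  simp at this

lemma hs3 : ((Real.sqrt 3 : ℝ):ℂ)^2 = 3 := by
  rw [← Complex.ofReal_pow, Real.sq_sqrt (by norm_num : (3:ℝ) ≥ 0)]
  norm_num

lemma hc2cube : c2 ^ 3 = -1 := by
  have h := hs3
  have hI := Complex.I_sq
  simp only [c2]
  push_cast
  linear_combination (3/8 * Complex.I^2 - (Real.sqrt 3:ℂ)/8 * Complex.I^3) * h +
    (9/8 - 3*(Real.sqrt 3:ℂ)/8 * Complex.I) * hI

lemma point (k : ℕ) (t : ℝ) :
    t ^ k * L3ker t =
      (((1/6 : ℝ):ℂ) * ((t:ℂ)^k * Complex.exp (-((1:ℂ) * t))) +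
        (((1/6 : ℝ):ℂ) - ((Real.sqrt 3 / 6 : ℝ):ℂ) * Complex.I) *
          ((t:ℂ)^k * Complex.exp (-(c2 * t)))).re := by
  simp only [c2]
  simp only [Complex.add_re, Complex.mul_re, Complex.sub_re, Complex.sub_im, Complex.mul_im,
    Complex.exp_re, Complex.exp_im, Complex.neg_re, Complex.neg_im, Complex.ofReal_re,
    Complex.ofReal_im, Complex.I_re, Complex.I_im, ← Complex.ofReal_pow, Complex.one_re,
    Complex.one_im, mul_zero, zero_mul, mul_one, one_mul, sub_zero, zero_sub, neg_zero, neg_neg,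
    add_zero, zero_add]
  rw [L3ker]
  ring_nf
  simp

lemma Ioi_int (k : ℕ) :
    ∫ t in Ioi (0:ℝ), t ^ k * L3ker t
      = (((1/6:ℝ):ℂ) * ((Nat.factorial k : ℂ) / 1 ^ (k+1))
        + (((1/6:ℝ):ℂ) - ((Real.sqrt 3/6:ℝ):ℂ) * Complex.I)
          * ((Nat.factorial k : ℂ) / c2 ^ (k+1))).re := by
  have h1 : (0:ℝ) < (1:ℂ).re := by simp
  have int1 : IntegrableOn
      (fun t : ℝ ↦ ((1/6:ℝ):ℂ) * ((t:ℂ)^k * Complex.exp (-((1:ℂ) * t)))) (Ioi 0) :=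
    (aux_integrable 1 h1 k).const_mul _
  have int2 : IntegrableOn
      (fun t : ℝ ↦ (((1/6:ℝ):ℂ) - ((Real.sqrt 3/6:ℝ):ℂ) * Complex.I)
        * ((t:ℂ)^k * Complex.exp (-(c2 * t)))) (Ioi 0) :=
    (aux_integrable c2 hc2re k).const_mul _
  calc ∫ t in Ioi (0:ℝ), t ^ k * L3ker t
      = ∫ t in Ioi (0:ℝ), (((1/6:ℝ):ℂ) * ((t:ℂ)^k * Complex.exp (-((1:ℂ) * t))) +
          (((1/6:ℝ):ℂ) - ((Real.sqrt 3/6:ℝ):ℂ) * Complex.I)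
            * ((t:ℂ)^k * Complex.exp (-(c2 * t)))).re := by
        simp_rw [point]
    _ = (∫ t in Ioi (0:ℝ), (((1/6:ℝ):ℂ) * ((t:ℂ)^k * Complex.exp (-((1:ℂ) * t))) +
          (((1/6:ℝ):ℂ) - ((Real.sqrt 3/6:ℝ):ℂ) * Complex.I)
            * ((t:ℂ)^k * Complex.exp (-(c2 * t))))).re := by
        simpa using integral_re (int1.add int2)
    _ = _ := by
        rw [integral_add int1 int2, integral_const_mul, integral_const_mul,
          aux_integral 1 h1 k, aux_integral c2 hc2re k]

lemma hB0 : (1:ℂ) / c2 = ((1/2:ℝ):ℂ) + ((Real.sqrt 3/2:ℝ):ℂ) * Complex.I := by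
  rw [div_eq_iff hc2ne]
  simp only [c2]
  push_cast
  linear_combination (Complex.I^2/4) * hs3 + (3/4) * Complex.I_sq

lemma hcbne : ((1/2:ℝ):ℂ) + ((Real.sqrt 3/2:ℝ):ℂ) * Complex.I ≠ 0 := by
  intro h
  have := congrArg Complex.re h
  simp at this

lemma hc2five : c2 ^ 5 = ((1/2:ℝ):ℂ) + ((Real.sqrt 3/2:ℝ):ℂ) * Complex.I := by
  have h : c2^5 = c2^3 * c2^2 := by ring
  rw [h, hc2cube]
  simp only [c2]
  push_cast
  linear_combination (-Complex.I^2/4) * hs3 + (-3/4) * Complex.I_sq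

lemma hB4 : (24:ℂ) / c2 ^ 5 = ((12:ℝ):ℂ) - ((12*Real.sqrt 3:ℝ):ℂ) * Complex.I := by
  rw [hc2five, div_eq_iff hcbne]
  push_cast
  linear_combination (6*Complex.I^2) * hs3 + 18 * Complex.I_sq

lemma e0 : (∫ t in Ioi (0:ℝ), L3ker t) = 1/2 := by
  have h := Ioi_int 0
  simp only [pow_zero, one_mul, Nat.factorial_zero, Nat.cast_one, pow_one, one_pow, zero_add] at h
  rw [h, hB0]
  have hs : Real.sqrt 3 * Real.sqrt 3 = 3 := Real.mul_self_sqrt (by norm_num)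
  simp [Complex.add_re, Complex.mul_re, Complex.sub_re, Complex.sub_im, Complex.add_im,
    Complex.mul_im, Complex.I_re, Complex.I_im, Complex.ofReal_re, Complex.ofReal_im]
  nlinarith [hs]

lemma e2 : (∫ t in Ioi (0:ℝ), t^2 * L3ker t) = 0 := by
  have h := Ioi_int 2
  have hf : (Nat.factorial 2 : ℂ) = 2 := by norm_num [Nat.factorial]
  rw [h, hf]
  rw [show (2:ℕ) + 1 = 3 from rfl, hc2cube]
  norm_num

lemma e4 : (∫ t in Ioi (0:ℝ), t^4 * L3ker t) = 0 := by
  have h := Ioi_int 4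
  have hf : (Nat.factorial 4 : ℂ) = 24 := by norm_num [Nat.factorial]
  rw [h, hf, show (4:ℕ) + 1 = 5 from rfl, hB4]
  have hs : Real.sqrt 3 * Real.sqrt 3 = 3 := Real.mul_self_sqrt (by norm_num)
  simp [Complex.add_re, Complex.mul_re, Complex.sub_re, Complex.sub_im, Complex.add_im,
    Complex.mul_im, Complex.I_re, Complex.I_im, Complex.ofReal_re, Complex.ofReal_im]
  nlinarith [hs]

/-- `L(|·|)` is a sixth-order kernel:
`∫ℝ L(|t|) dt = 1`, `∫ℝ t² L(|t|) dt = 0`, and `∫ℝ t⁴ L(|t|) dt = 0`. -/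
theorem L3ker_sixth_order_kernel :
    (∫ t : ℝ, L3ker |t|) = 1 ∧ (∫ t : ℝ, t ^ 2 * L3ker |t|) = 0 ∧
      (∫ t : ℝ, t ^ 4 * L3ker |t|) = 0 := by
  refine ⟨?_, ?_, ?_⟩
  · rw [integral_comp_abs (f := fun x ↦ L3ker x), e0]
    norm_num
  · have habs : ∀ t : ℝ, t ^ 2 * L3ker |t| = (fun x ↦ x ^ 2 * L3ker x) |t| := fun t => by
      simp [sq_abs]
    simp_rw [habs]
    rw [integral_comp_abs (f := fun x ↦ x ^ 2 * L3ker x), e2, mul_zero]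
  · have habs : ∀ t : ℝ, t ^ 4 * L3ker |t| = (fun x ↦ x ^ 4 * L3ker x) |t| := fun t => by
      have : |t| ^ 4 = t ^ 4 := by
        rw [← abs_pow, abs_of_nonneg (by positivity)]
      simp [this]
    simp_rw [habs]
    rw [integral_comp_abs (f := fun x ↦ x ^ 4 * L3ker x), e4, mul_zero]

end
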